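/- (Equality case for the Rényi–Shannon inequality, α ∈ (0,1)) For α ∈ (0,1) and b > n(1/α - 1), the function φ₁(x) = C₁(1+|x|^b)^{1/(α-1)} (with C₁ normalizing ∫ φ₁ = 1) satisfies the Rényi–Shannon inequality with equality: (1-α)⁻¹ log ∫ φ₁^α = (n/b) log ( A^{b/n} ∫ |x|^b φ₁ dx ), with A as in the sharp Rényi–Shannon inequality. -/

import Mathlib

open MeasureTheory Real Set


lemma realBeta01 {u v : ℝ} (hu : 0 < u) (hv : 0 < v) :
    ∫ x in (0:ℝ)..1, x ^ (u - 1) * (1 - x) ^ (v - 1)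
      = Gamma u * Gamma v / Gamma (u + v) := by
  have key := Complex.Gamma_mul_Gamma_eq_betaIntegral (s := (u : ℂ)) (t := (v : ℂ))
    (by simpa using hu) (by simpa using hv)
  have hB : Complex.betaIntegral (u : ℂ) (v : ℂ)
      = ((∫ x in (0:ℝ)..1, x ^ (u - 1) * (1 - x) ^ (v - 1) : ℝ) : ℂ) := by
    rw [Complex.betaIntegral, ← intervalIntegral.integral_ofReal]
    refine intervalIntegral.integral_congr fun x hx => ?_
    rw [uIcc_of_le zero_le_one] at hx
    push_cast
    rw [Complex.ofReal_cpow hx.1, Complex.ofReal_cpow (by linarith [hx.2] : (0:ℝ) ≤ 1 - x)]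
    push_cast
    ring
  rw [hB, ← Complex.ofReal_add, Complex.Gamma_ofReal, Complex.Gamma_ofReal,
    Complex.Gamma_ofReal] at key
  have key' : Gamma u * Gamma v
      = Gamma (u + v) * ∫ x in (0:ℝ)..1, x ^ (u - 1) * (1 - x) ^ (v - 1) := by
    exact_mod_cast key
  have hG : Gamma (u + v) ≠ 0 := (Real.Gamma_pos_of_pos (by linarith)).ne'
  field_simp [key']
  linarith [key']

lemma realBetaIoi {u v : ℝ} (hu : 0 < u) (hv : 0 < v) :
    ∫ t in Ioi (0:ℝ), t ^ (u - 1) * (1 + t) ^ (-(u + v))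
      = Gamma u * Gamma v / Gamma (u + v) := by
  have himg : (fun x : ℝ => x / (1 - x)) '' Ioo (0:ℝ) 1 = Ioi (0:ℝ) := by
    ext t
    simp only [mem_image, mem_Ioo, mem_Ioi]
    constructor
    · rintro ⟨x, ⟨hx0, hx1⟩, rfl⟩
      exact div_pos hx0 (by linarith)
    · intro ht
      refine ⟨t / (1 + t), ⟨div_pos ht (by linarith), ?_⟩, ?_⟩
      · rw [div_lt_one (by linarith)]; linarith
      · field_simp
        ring
  have hderiv : ∀ x ∈ Ioo (0:ℝ) 1,
      HasDerivWithinAt (fun x : ℝ => x / (1 - x)) (1 / (1 - x) ^ 2) (Ioo (0:ℝ) 1) x := by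
    intro x hx
    have h1x : (1:ℝ) - x ≠ 0 := ne_of_gt (by linarith [hx.2])
    have : HasDerivAt (fun x : ℝ => x / (1 - x)) ((1 * (1 - x) - x * -1) / (1 - x) ^ 2) x :=
      (hasDerivAt_id x).div ((hasDerivAt_id x).const_sub 1) h1x
    rw [show (1 * (1 - x) - x * -1) / (1 - x) ^ 2 = 1 / (1 - x) ^ 2 by ring] at this
    exact this.hasDerivWithinAt
  have hinj : InjOn (fun x : ℝ => x / (1 - x)) (Ioo (0:ℝ) 1) := by
    intro a ha b hb h
    have h1a : (0:ℝ) < 1 - a := by linarith [ha.2]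
    have h1b : (0:ℝ) < 1 - b := by linarith [hb.2]
    simp only at h
    rw [div_eq_div_iff h1a.ne' h1b.ne'] at h
    linear_combination h
  have key := integral_image_eq_integral_abs_deriv_smul measurableSet_Ioo hderiv hinj
    (fun t : ℝ => t ^ (u - 1) * (1 + t) ^ (-(u + v)))
  rw [himg] at key
  rw [key]
  have hcongr : ∀ x ∈ Ioo (0:ℝ) 1,
      |1 / (1 - x) ^ 2| • ((x / (1 - x)) ^ (u - 1) * (1 + x / (1 - x)) ^ (-(u + v)))
        = x ^ (u - 1) * (1 - x) ^ (v - 1) := by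
    intro x hx
    have hx0 : 0 < x := hx.1
    have hy0 : 0 < 1 - x := by linarith [hx.2]
    have h1 : 1 + x / (1 - x) = (1 - x)⁻¹ := by field_simp; ring
    have e1 : ((1 - x)⁻¹) ^ (-(u + v)) = (1 - x) ^ (u + v) := by
      rw [Real.inv_rpow hy0.le, ← Real.rpow_neg hy0.le, neg_neg]
    have e2 : (x / (1 - x)) ^ (u - 1) = x ^ (u - 1) * (1 - x) ^ (1 - u) := by
      rw [Real.div_rpow hx0.le hy0.le, div_eq_mul_inv, ← Real.rpow_neg hy0.le, neg_sub]
    have e4 : (1:ℝ) / (1 - x) ^ 2 = (1 - x) ^ (-(2:ℝ)) := by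
      rw [one_div, ← Real.rpow_natCast (1 - x) 2, ← Real.rpow_neg hy0.le]
      norm_num
    rw [smul_eq_mul, h1, abs_of_pos (by positivity : (0:ℝ) < 1 / (1 - x) ^ 2), e2, e1, e4]
    calc (1 - x) ^ (-(2:ℝ)) * (x ^ (u - 1) * (1 - x) ^ (1 - u) * (1 - x) ^ (u + v))
        = x ^ (u - 1) * ((1 - x) ^ (-(2:ℝ)) * (1 - x) ^ (1 - u) * (1 - x) ^ (u + v)) := by ring
      _ = x ^ (u - 1) * (1 - x) ^ (v - 1) := by
          rw [← Real.rpow_add hy0, ← Real.rpow_add hy0]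
          congr 1
          ring_nf
  rw [setIntegral_congr_fun measurableSet_Ioo hcongr, ← integral_Ioc_eq_integral_Ioo,
    ← intervalIntegral.integral_of_le zero_le_one, realBeta01 hu hv]

lemma radialInt {b s p : ℝ} (hb : 0 < b) (hs : 0 < s) (hsp : s / b < p) :
    ∫ y in Ioi (0:ℝ), y ^ (s - 1) * (1 + y ^ b) ^ (-p)
      = (1 / b) * (Gamma (s / b) * Gamma (p - s / b) / Gamma p) := by
  have key := integral_comp_rpow_Ioi_of_pos
    (g := fun t : ℝ => (1 / b) * (t ^ (s / b - 1) * (1 + t) ^ (-p))) hb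
  have hcongr : ∀ y ∈ Ioi (0:ℝ),
      (b * y ^ (b - 1)) • ((1 / b) * ((y ^ b) ^ (s / b - 1) * (1 + y ^ b) ^ (-p)))
        = y ^ (s - 1) * (1 + y ^ b) ^ (-p) := by
    intro y hy
    have hy0 : (0:ℝ) < y := hy
    have e1 : (y ^ b) ^ (s / b - 1) = y ^ (s - b) := by
      rw [← Real.rpow_mul hy0.le]
      congr 1
      field_simp
    rw [smul_eq_mul, e1]
    have e2 : b * y ^ (b - 1) * (1 / b * (y ^ (s - b) * (1 + y ^ b) ^ (-p)))
        = (y ^ (b - 1) * y ^ (s - b)) * (1 + y ^ b) ^ (-p) := by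
      field_simp
    rw [e2, ← Real.rpow_add hy0]
    congr 2
    ring
  rw [← setIntegral_congr_fun measurableSet_Ioi hcongr, key]
  rw [integral_const_mul]
  have hu : 0 < s / b := div_pos hs hb
  have hv : 0 < p - s / b := by linarith
  have := realBetaIoi hu hv
  rw [show s / b + (p - s / b) = p by ring] at this
  rw [show ∫ t in Ioi (0:ℝ), t ^ (s/b - 1) * (1 + t) ^ (-p)
      = Gamma (s/b) * Gamma (p - s/b) / Gamma p from this]

lemma euclidRadial (n : ℕ) (hn : 1 ≤ n) (f : ℝ → ℝ) :
    ∫ x : EuclideanSpace ℝ (Fin n), f ‖x‖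
      = (2 * π ^ ((n:ℝ) / 2) / Gamma ((n:ℝ) / 2))
        * ∫ y in Ioi (0:ℝ), y ^ ((n:ℝ) - 1) * f y := by
  haveI : Nonempty (Fin n) := ⟨⟨0, hn⟩⟩
  haveI : Nontrivial (EuclideanSpace ℝ (Fin n)) := by
    refine ⟨0, EuclideanSpace.single ⟨0, hn⟩ 1, ?_⟩
    intro h
    have := congrArg (fun v => v ⟨0, hn⟩) h.symm
    simp [EuclideanSpace.single] at this
  have key := MeasureTheory.integral_fun_norm_addHaar
    (volume : Measure (EuclideanSpace ℝ (Fin n))) f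
  have hdim : Module.finrank ℝ (EuclideanSpace ℝ (Fin n)) = n := by
    simp [finrank_euclideanSpace]
  rw [hdim] at key
  rw [key]
  have hvol : (volume (Metric.ball (0 : EuclideanSpace ℝ (Fin n)) 1)).toReal
      = Real.sqrt π ^ n / Gamma ((n:ℝ) / 2 + 1) := by
    rw [EuclideanSpace.volume_ball]
    simp [Fintype.card_fin, ENNReal.toReal_ofReal
      (by positivity : (0:ℝ) ≤ Real.sqrt π ^ n / Gamma ((n:ℝ) / 2 + 1))]
  have hG : Gamma ((n:ℝ)/2) > 0 := Real.Gamma_pos_of_pos (by positivity)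
  have hsq : Real.sqrt π ^ n = π ^ ((n:ℝ)/2) := by
    rw [Real.sqrt_eq_rpow, ← Real.rpow_natCast (π ^ ((1:ℝ)/2)) n, ← Real.rpow_mul pi_pos.le]
    congr 1
    ring
  have hGadd : Gamma ((n:ℝ)/2 + 1) = ((n:ℝ)/2) * Gamma ((n:ℝ)/2) := by
    rw [Real.Gamma_add_one (by positivity)]
  have hconst : (n : ℝ) * (Real.sqrt π ^ n / Gamma ((n:ℝ)/2 + 1))
      = 2 * π ^ ((n:ℝ)/2) / Gamma ((n:ℝ)/2) := by
    rw [hsq, hGadd]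
    have hn0 : (n:ℝ) ≠ 0 := Nat.cast_ne_zero.mpr (by omega)
    field_simp
  have hinner : ∫ y in Ioi (0:ℝ), y ^ (n - 1) • f y
      = ∫ y in Ioi (0:ℝ), y ^ ((n:ℝ) - 1) * f y := by
    refine setIntegral_congr_fun measurableSet_Ioi fun y hy => ?_
    rw [smul_eq_mul, ← Real.rpow_natCast y (n-1), Nat.cast_sub hn, Nat.cast_one]
  rw [nsmul_eq_mul, smul_eq_mul, measureReal_def, hvol, hinner, ← mul_assoc, hconst]

lemma algAux {S b q d G1 G2 G3 : ℝ} (hS : S ≠ 0) (hb : b ≠ 0) (hd : d ≠ 0)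
    (hG1 : G1 ≠ 0) (hG2 : G2 ≠ 0) (hG3 : G3 ≠ 0) :
    b / S * (q * G3 / (d * G2 * G1)) * (S * (1 / b * (G1 * G2 / G3))) = q / d := by
  field_simp

lemma algAux2 {S b q c d G1 G2 G3 : ℝ} (hS : S ≠ 0) (hb : b ≠ 0) (hd : d ≠ 0)
    (hq : q ≠ 0) (hG1 : G1 ≠ 0) (hG2 : G2 ≠ 0) (hG3 : G3 ≠ 0) :
    S * (b / S * (q * G3 / (d * G2 * G1)) * (1 / b * (c * G1 * G2 / (q * G3)))) = c / d := by
  field_simp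

/-- Equality case of the Rényi–Shannon inequality for `α ∈ (0,1)`:
the extremal profile `φ₁` attains equality. -/
theorem renyi_shannon_equality_phi_one (n : ℕ) (hn : 1 ≤ n) (α b : ℝ)
    (hα : α ∈ Set.Ioo (0 : ℝ) 1) (hb : (n : ℝ) * (1 / α - 1) < b)
    (C₁ A : ℝ)
    (hC₁ : C₁ = b / (2 * Real.pi ^ ((n : ℝ) / 2) / Real.Gamma ((n : ℝ) / 2)) *
      (Real.Gamma (1 / (1 - α)) /
        (Real.Gamma (1 / (1 - α) - (n : ℝ) / b) * Real.Gamma ((n : ℝ) / b))))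
    (hA : A = C₁⁻¹ * (α * b / (α * b - (n : ℝ) * (1 - α))) ^ (1 / (1 - α)) *
      ((α * b - (n : ℝ) * (1 - α)) / ((n : ℝ) * (1 - α))) ^ ((n : ℝ) / b))
    (φ₁ : EuclideanSpace ℝ (Fin n) → ℝ)
    (hφ₁ : φ₁ = fun x => C₁ * (1 + ‖x‖ ^ b) ^ (1 / (α - 1))) :
    (1 - α)⁻¹ * Real.log (∫ x, φ₁ x ^ α) =
      ((n : ℝ) / b) * Real.log (A ^ (b / (n : ℝ)) * ∫ x, ‖x‖ ^ b * φ₁ x) := by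
  obtain ⟨hα0, hα1⟩ := hα
  have h1α : (0:ℝ) < 1 - α := by linarith
  have hn0 : (0:ℝ) < (n:ℝ) := by exact_mod_cast Nat.pos_of_ne_zero (by omega)
  have hαinv : α * (1/α) = 1 := by field_simp
  have hb0 : (0:ℝ) < b := by nlinarith
  have hkey : (n:ℝ) * (1 - α) < α * b := by nlinarith [mul_lt_mul_of_pos_left hb hα0]
  have hc0 : (0:ℝ) < (n:ℝ)/b := div_pos hn0 hb0
  have hq0 : (0:ℝ) < α/(1-α) := div_pos hα0 h1α
  have hcq : (n:ℝ)/b < α/(1-α) := by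
    rw [div_lt_div_iff₀ hb0 h1α]; nlinarith
  have hD0 : (0:ℝ) < α/(1-α) - (n:ℝ)/b := by linarith
  -- Gamma positivity
  have hGhalf : (0:ℝ) < Gamma ((n:ℝ)/2) := Real.Gamma_pos_of_pos (by positivity)
  have hG1 : (0:ℝ) < Gamma ((n:ℝ)/b) := Real.Gamma_pos_of_pos hc0
  have hG2 : (0:ℝ) < Gamma (α/(1-α) - (n:ℝ)/b) := Real.Gamma_pos_of_pos hD0
  have hG3 : (0:ℝ) < Gamma (α/(1-α)) := Real.Gamma_pos_of_pos hq0
  have hπ : (0:ℝ) < π ^ ((n:ℝ)/2) := Real.rpow_pos_of_pos pi_pos _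
  have hq1 : 1/(1-α) = α/(1-α) + 1 := by field_simp; ring
  have hrec1 : Gamma (1/(1-α)) = (α/(1-α)) * Gamma (α/(1-α)) := by
    rw [hq1, Real.Gamma_add_one hq0.ne']
  have hrec2 : Gamma (1/(1-α) - (n:ℝ)/b)
      = (α/(1-α) - (n:ℝ)/b) * Gamma (α/(1-α) - (n:ℝ)/b) := by
    rw [show 1/(1-α) - (n:ℝ)/b = (α/(1-α) - (n:ℝ)/b) + 1 by rw [hq1]; ring,
      Real.Gamma_add_one hD0.ne']
  have hrec3 : Gamma ((n:ℝ)/b + 1) = ((n:ℝ)/b) * Gamma ((n:ℝ)/b) :=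
    Real.Gamma_add_one hc0.ne'
  have hC₁pos : (0:ℝ) < C₁ := by
    rw [hC₁]
    have h1 : (0:ℝ) < b / (2 * π ^ ((n:ℝ)/2) / Gamma ((n:ℝ)/2)) :=
      div_pos hb0 (div_pos (by positivity) hGhalf)
    exact mul_pos h1 (div_pos (Real.Gamma_pos_of_pos (by rw [hq1]; positivity))
      (mul_pos (Real.Gamma_pos_of_pos (by rw [hq1]; linarith)) hG1))
  -- value of ∫ φ₁ ^ α
  have hJ : (∫ x, φ₁ x ^ α)
      = C₁ ^ (α - 1) * ((α/(1-α)) / (α/(1-α) - (n:ℝ)/b)) := by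
    have hr := euclidRadial n hn (fun y => (C₁ * (1 + y ^ b) ^ (1/(α-1))) ^ α)
    rw [hφ₁]
    simp only []
    rw [hr]
    have h2 : ∫ y in Ioi (0:ℝ), y ^ ((n:ℝ)-1) * (C₁ * (1+y^b) ^ (1/(α-1))) ^ α
        = C₁ ^ α * ∫ y in Ioi (0:ℝ), y ^ ((n:ℝ)-1) * (1+y^b) ^ (-(α/(1-α))) := by
      rw [← integral_const_mul]
      refine setIntegral_congr_fun measurableSet_Ioi fun y hy => ?_
      have hy0 : (0:ℝ) < y := hy
      have h1yb : (0:ℝ) < 1 + y ^ b := by positivity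
      rw [Real.mul_rpow hC₁pos.le (Real.rpow_nonneg h1yb.le _),
        ← Real.rpow_mul h1yb.le,
        show (1/(α-1)) * α = -(α/(1-α)) by
          rw [div_mul_eq_mul_div, one_mul, show α - 1 = -(1-α) by ring, div_neg]]
      ring
    have hconst : C₁ * (2 * π ^ ((n:ℝ)/2) / Gamma ((n:ℝ)/2)
          * ((1/b) * (Gamma ((n:ℝ)/b) * Gamma (α/(1-α) - (n:ℝ)/b) / Gamma (α/(1-α)))))
        = (α/(1-α)) / (α/(1-α) - (n:ℝ)/b) := by
      rw [hC₁, hrec1, hrec2]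
      exact algAux (by positivity) hb0.ne' hD0.ne' hG1.ne' hG2.ne' hG3.ne'
    rw [h2, radialInt hb0 hn0 hcq, show α = (α-1) + 1 by ring,
      Real.rpow_add hC₁pos, Real.rpow_one, show (α-1) + 1 = α by ring]
    linear_combination (C₁ ^ (α-1)) * hconst
  -- value of ∫ ‖x‖^b φ₁
  have hK : (∫ x, ‖x‖ ^ b * φ₁ x)
      = ((n:ℝ)/b) / (α/(1-α) - (n:ℝ)/b) := by
    have hr := euclidRadial n hn (fun y => y ^ b * (C₁ * (1 + y ^ b) ^ (1/(α-1))))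
    rw [hφ₁]
    simp only []
    rw [hr]
    have h2 : ∫ y in Ioi (0:ℝ), y ^ ((n:ℝ)-1) * (y ^ b * (C₁ * (1+y^b) ^ (1/(α-1))))
        = C₁ * ∫ y in Ioi (0:ℝ), y ^ ((n:ℝ)+b-1) * (1+y^b) ^ (-(1/(1-α))) := by
      rw [← integral_const_mul]
      refine setIntegral_congr_fun measurableSet_Ioi fun y hy => ?_
      have hy0 : (0:ℝ) < y := hy
      rw [show (1/(α-1)) = -(1/(1-α)) by
        rw [show α - 1 = -(1-α) by ring, div_neg]]
      rw [show y ^ ((n:ℝ)-1) * (y ^ b * (C₁ * (1+y^b) ^ (-(1/(1-α)))))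
          = C₁ * ((y ^ ((n:ℝ)-1) * y ^ b) * (1+y^b) ^ (-(1/(1-α)))) by ring,
        ← Real.rpow_add hy0, show (n:ℝ) - 1 + b = (n:ℝ) + b - 1 by ring]
    have hs2 : (0:ℝ) < (n:ℝ) + b := by linarith
    have hsp2 : ((n:ℝ)+b)/b < 1/(1-α) := by
      rw [hq1, add_div, div_self hb0.ne']
      linarith
    rw [h2, radialInt hb0 hs2 hsp2,
      show ((n:ℝ)+b)/b = (n:ℝ)/b + 1 by rw [add_div, div_self hb0.ne'],
      show 1/(1-α) - ((n:ℝ)/b + 1) = α/(1-α) - (n:ℝ)/b by rw [hq1]; ring,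
      hC₁, hrec1, hrec2, hrec3]
    exact algAux2 (by positivity) hb0.ne' hD0.ne' hq0.ne' hG1.ne' hG2.ne' hG3.ne'
  -- A in terms of q, c
  have hX : α * b / (α * b - (n:ℝ) * (1-α))
      = (α/(1-α)) / (α/(1-α) - (n:ℝ)/b) := by
    rw [div_eq_div_iff (by linarith) (by linarith)]
    field_simp
  have hY : (α * b - (n:ℝ) * (1-α)) / ((n:ℝ) * (1-α))
      = (α/(1-α) - (n:ℝ)/b) / ((n:ℝ)/b) := by
    rw [div_eq_div_iff (by positivity) (by positivity)]
    field_simp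
  have hA' : A = C₁⁻¹ * ((α/(1-α)) / (α/(1-α) - (n:ℝ)/b)) ^ (1/(1-α))
      * ((α/(1-α) - (n:ℝ)/b) / ((n:ℝ)/b)) ^ ((n:ℝ)/b) := by
    rw [hA, hX, hY]
  have hQD : (0:ℝ) < (α/(1-α)) / (α/(1-α) - (n:ℝ)/b) := div_pos hq0 hD0
  have hDC : (0:ℝ) < (α/(1-α) - (n:ℝ)/b) / ((n:ℝ)/b) := div_pos hD0 hc0
  have hApos : (0:ℝ) < A := by
    rw [hA']
    exact mul_pos (mul_pos (inv_pos.mpr hC₁pos) (Real.rpow_pos_of_pos hQD _))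
      (Real.rpow_pos_of_pos hDC _)
  -- final log computation
  rw [hJ, hK, Real.log_mul (by positivity) (div_pos hc0 hD0).ne',
    Real.log_rpow hApos, hA',
    Real.log_mul (by positivity) (Real.rpow_pos_of_pos hDC _).ne',
    Real.log_mul (by positivity) (Real.rpow_pos_of_pos hQD _).ne',
    Real.log_rpow hQD, Real.log_rpow hDC, Real.log_inv,
    Real.log_mul (Real.rpow_pos_of_pos hC₁pos _).ne' hQD.ne',
    Real.log_rpow hC₁pos,
    Real.log_div hq0.ne' hD0.ne', Real.log_div hD0.ne' hc0.ne',
    Real.log_div hc0.ne' hD0.ne']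
  have hbn : ((n:ℝ)/b) * (b/(n:ℝ)) = 1 := by field_simp
  field_simp
  ring
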